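/- The Poisson bracket on 1-forms satisfies the Jacobi identity: for all α, β, γ ∈ 𝒜ⁿ and every i ∈ {1,…,n}, one has {α, {β, γ}}_i + {β, {γ, α}}_i + {γ, {α, β}}_i = 0 in 𝒜. -/

import Mathlib

open Finset

/-- An abstract model of the ring `𝒜` of differential polynomials in the formal
variables `u^i_{(s)}` (`i = 1,…,n`, `s ≥ 0`, `u^i_{(0)} = u^i`): a commutative
`ℝ`-algebra `A` equipped with the variables `u (i,s)`, the partial derivatives
`pd (i,s) = ∂/∂u^i_{(s)}` (commuting `ℝ`-linear derivations with
`∂u^j_{(t)}/∂u^i_{(s)} = δ`), a finiteness witness `supp f` (each `f` depends on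
finitely many of the variables), and the total `x`-derivative
`∂_x f = Σ_{i,s} u^i_{(s+1)} ∂f/∂u^i_{(s)}` (a finite sum on each `f`). -/
structure DiffPolyAlg (n : ℕ) (A : Type*) [CommRing A] [Algebra ℝ A] where
  u : Fin n × ℕ → A
  pd : Fin n × ℕ → A → A
  pd_add : ∀ v f g, pd v (f + g) = pd v f + pd v g
  pd_smul : ∀ v (r : ℝ) f, pd v (r • f) = r • pd v f
  pd_mul : ∀ v f g, pd v (f * g) = pd v f * g + f * pd v g
  pd_u : ∀ v w, pd v (u w) = if v = w then 1 else 0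
  pd_comm : ∀ v w f, pd v (pd w f) = pd w (pd v f)
  supp : A → Finset (Fin n × ℕ)
  pd_eq_zero : ∀ f v, v ∉ supp f → pd v f = 0
  Dx : A → A
  Dx_add : ∀ f g, Dx (f + g) = Dx f + Dx g
  Dx_smul : ∀ (r : ℝ) f, Dx (r • f) = r • Dx f
  Dx_mul : ∀ f g, Dx (f * g) = Dx f * g + f * Dx g
  Dx_spec : ∀ f, ∀ S : Finset (Fin n × ℕ), supp f ⊆ S →
      Dx f = ∑ v ∈ S, u (v.1, v.2 + 1) * pd v f

namespace DiffPolyAlg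

variable {n : ℕ} {A : Type*} [CommRing A] [Algebra ℝ A]

/-- The finite set of orders `s` such that `∂f/∂u^i_{(s)}` can be nonzero;
sums `Σ_s` below are taken over this set. -/
def sset (D : DiffPolyAlg n A) (f : A) (i : Fin n) : Finset ℕ :=
  ((D.supp f).filter fun v => v.1 = i).image Prod.snd

/-- The components `{α,β}_i = Σ_{k,l,s} η^{kl} [ (∂_x^{s+1}β_l)(∂α_i/∂u^k_{(s)})
− (∂_x^{s+1}α_l)(∂β_i/∂u^k_{(s)}) ]` of the Poisson bracket of two reduced
1-forms in flat coordinates (the sum over the pairs `(k,s)` is restricted to the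
finite set where the partial derivatives can be nonzero). -/
def pbracket (D : DiffPolyAlg n A) (η : Fin n → Fin n → ℝ)
    (α β : Fin n → A) : Fin n → A := fun i =>
  (∑ v ∈ D.supp (α i), ∑ l, η v.1 l • (D.Dx^[v.2 + 1] (β l) * D.pd v (α i)))
    - ∑ v ∈ D.supp (β i), ∑ l, η v.1 l • (D.Dx^[v.2 + 1] (α l) * D.pd v (β i))

end DiffPolyAlg

namespace DiffPolyAlg

variable {n : ℕ} {A : Type*} [CommRing A] [Algebra ℝ A] (D : DiffPolyAlg n A)

theorem pd_zero' (v : Fin n × ℕ) : D.pd v 0 = 0 := by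
  have h := D.pd_add v 0 0
  rw [add_zero] at h
  exact left_eq_add.mp h

theorem pd_sum' {ι : Type*} (v : Fin n × ℕ) (s : Finset ι) (F : ι → A) :
    D.pd v (∑ x ∈ s, F x) = ∑ x ∈ s, D.pd v (F x) := by
  classical
  induction s using Finset.induction_on with
  | empty => simpa using D.pd_zero' v
  | insert _ _ hx ih => rw [Finset.sum_insert hx, Finset.sum_insert hx, D.pd_add, ih]

theorem Dx_zero' : D.Dx 0 = 0 := by
  have h := D.Dx_add 0 0
  rw [add_zero] at h
  exact left_eq_add.mp h

theorem Dx_sum' {ι : Type*} (s : Finset ι) (F : ι → A) :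
    D.Dx (∑ x ∈ s, F x) = ∑ x ∈ s, D.Dx (F x) := by
  classical
  induction s using Finset.induction_on with
  | empty => simpa using D.Dx_zero'
  | insert _ _ hx ih => rw [Finset.sum_insert hx, Finset.sum_insert hx, D.Dx_add, ih]

theorem Dx_neg' (f : A) : D.Dx (-f) = - D.Dx f := by
  have h := D.Dx_smul (-1 : ℝ) f
  simpa [neg_smul, one_smul] using h

theorem Dx_sub' (f g : A) : D.Dx (f - g) = D.Dx f - D.Dx g := by
  rw [sub_eq_add_neg, D.Dx_add, D.Dx_neg', sub_eq_add_neg]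

theorem DxI_add (m : ℕ) (f g : A) :
    D.Dx^[m] (f + g) = D.Dx^[m] f + D.Dx^[m] g := by
  induction m with
  | zero => simp
  | succ m ih =>
      simp only [Function.iterate_succ_apply', ih, D.Dx_add]

theorem DxI_sub (m : ℕ) (f g : A) :
    D.Dx^[m] (f - g) = D.Dx^[m] f - D.Dx^[m] g := by
  induction m with
  | zero => simp
  | succ m ih =>
      simp only [Function.iterate_succ_apply', ih, D.Dx_sub']

theorem DxI_smul (m : ℕ) (r : ℝ) (f : A) :
    D.Dx^[m] (r • f) = r • D.Dx^[m] f := by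
  induction m with
  | zero => simp
  | succ m ih =>
      simp only [Function.iterate_succ_apply', ih, D.Dx_smul]

theorem DxI_sum {ι : Type*} (m : ℕ) (s : Finset ι) (F : ι → A) :
    D.Dx^[m] (∑ x ∈ s, F x) = ∑ x ∈ s, D.Dx^[m] (F x) := by
  induction m with
  | zero => simp
  | succ m ih =>
      simp only [Function.iterate_succ_apply', ih, D.Dx_sum']

/-- Evolutionary vector field with characteristic `b`. -/
def Vf (b : Fin n → A) (f : A) : A :=
  ∑ v ∈ D.supp f, D.Dx^[v.2] (b v.1) * D.pd v f

theorem Vf_spec (b : Fin n → A) (f : A) {S : Finset (Fin n × ℕ)}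
    (h : D.supp f ⊆ S) :
    D.Vf b f = ∑ v ∈ S, D.Dx^[v.2] (b v.1) * D.pd v f :=
  Finset.sum_subset h (fun v _ hv => by rw [D.pd_eq_zero f v hv, mul_zero])

theorem Vf_add (b : Fin n → A) (f g : A) :
    D.Vf b (f + g) = D.Vf b f + D.Vf b g := by
  classical
  set S := D.supp f ∪ D.supp g ∪ D.supp (f + g) with hS
  have h1 : D.supp f ⊆ S := (Finset.subset_union_left).trans Finset.subset_union_left
  have h2 : D.supp g ⊆ S := (Finset.subset_union_right).trans Finset.subset_union_left
  have h3 : D.supp (f + g) ⊆ S := Finset.subset_union_right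
  rw [D.Vf_spec b f h1, D.Vf_spec b g h2, D.Vf_spec b (f + g) h3]
  simp only [D.pd_add, mul_add, Finset.sum_add_distrib]

theorem Vf_zero (b : Fin n → A) : D.Vf b 0 = 0 := by
  simp [Vf, D.pd_zero']

theorem Vf_neg (b : Fin n → A) (f : A) : D.Vf b (-f) = - D.Vf b f := by
  have h := D.Vf_add b f (-f)
  rw [add_neg_cancel, D.Vf_zero] at h
  exact eq_neg_of_add_eq_zero_right h.symm

theorem Vf_sub (b : Fin n → A) (f g : A) :
    D.Vf b (f - g) = D.Vf b f - D.Vf b g := by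
  rw [sub_eq_add_neg, D.Vf_add, D.Vf_neg, sub_eq_add_neg]

theorem Vf_smul (b : Fin n → A) (r : ℝ) (f : A) :
    D.Vf b (r • f) = r • D.Vf b f := by
  classical
  set S := D.supp f ∪ D.supp (r • f) with hS
  have h1 : D.supp f ⊆ S := Finset.subset_union_left
  have h2 : D.supp (r • f) ⊆ S := Finset.subset_union_right
  rw [D.Vf_spec b f h1, D.Vf_spec b (r • f) h2, Finset.smul_sum]
  simp only [D.pd_smul, mul_smul_comm]

theorem Vf_mul (b : Fin n → A) (f g : A) :
    D.Vf b (f * g) = D.Vf b f * g + f * D.Vf b g := by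
  classical
  set S := D.supp f ∪ D.supp g ∪ D.supp (f * g) with hS
  have h1 : D.supp f ⊆ S := (Finset.subset_union_left).trans Finset.subset_union_left
  have h2 : D.supp g ⊆ S := (Finset.subset_union_right).trans Finset.subset_union_left
  have h3 : D.supp (f * g) ⊆ S := Finset.subset_union_right
  rw [D.Vf_spec b f h1, D.Vf_spec b g h2, D.Vf_spec b (f * g) h3,
    Finset.sum_mul, Finset.mul_sum, ← Finset.sum_add_distrib]
  refine Finset.sum_congr rfl fun v _ => ?_
  rw [D.pd_mul]
  ring

theorem Vf_sum {ι : Type*} (b : Fin n → A) (s : Finset ι) (F : ι → A) :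
    D.Vf b (∑ x ∈ s, F x) = ∑ x ∈ s, D.Vf b (F x) := by
  classical
  induction s using Finset.induction_on with
  | empty => simpa using D.Vf_zero b
  | insert _ _ hx ih => rw [Finset.sum_insert hx, Finset.sum_insert hx, D.Vf_add, ih]

end DiffPolyAlg


namespace DiffPolyAlg

variable {n : ℕ} {A : Type*} [CommRing A] [Algebra ℝ A] (D : DiffPolyAlg n A)

theorem Vf_Dx (b : Fin n → A) (f : A) : D.Vf b (D.Dx f) = D.Dx (D.Vf b f) := by
  classical
  set S : Finset (Fin n × ℕ) :=
    D.supp f ∪ D.supp (D.Dx f) ∪ (D.supp f).biUnion (fun v => D.supp (D.pd v f)) with hS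
  set T : Finset (Fin n × ℕ) := S ∪ S.image (fun w => (w.1, w.2 + 1)) with hT
  have hfS : D.supp f ⊆ S :=
    Finset.subset_union_left.trans Finset.subset_union_left
  have hST : S ⊆ T := Finset.subset_union_left
  have hDxT : D.supp (D.Dx f) ⊆ T :=
    (Finset.subset_union_right.trans Finset.subset_union_left).trans hST
  have hpdS : ∀ v ∈ D.supp f, D.supp (D.pd v f) ⊆ S := fun v hv => by
    rw [hS]
    exact (Finset.subset_biUnion_of_mem (fun v => D.supp (D.pd v f)) hv).trans Finset.subset_union_right
  have expand : ∀ v : Fin n × ℕ,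
      D.pd v (∑ w ∈ S, D.u (w.1, w.2 + 1) * D.pd w f)
        = (∑ w ∈ S, (if v = (w.1, w.2 + 1) then (1 : A) else 0) * D.pd w f)
          + ∑ w ∈ S, D.u (w.1, w.2 + 1) * D.pd v (D.pd w f) := by
    intro v
    rw [D.pd_sum', ← Finset.sum_add_distrib]
    exact Finset.sum_congr rfl fun w _ => by rw [D.pd_mul, D.pd_u]
  have t1 : (∑ v ∈ T, D.Dx^[v.2] (b v.1) *
        ∑ w ∈ S, (if v = (w.1, w.2 + 1) then (1 : A) else 0) * D.pd w f)
      = ∑ w ∈ S, D.Dx (D.Dx^[w.2] (b w.1)) * D.pd w f := by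
    simp only [Finset.mul_sum, ite_mul, one_mul, zero_mul, mul_ite, mul_zero]
    rw [Finset.sum_comm]
    refine Finset.sum_congr rfl fun w hw => ?_
    rw [Finset.sum_ite_eq' T ((w.1, w.2 + 1)) (fun v => D.Dx^[v.2] (b v.1) * D.pd w f)]
    rw [if_pos (Finset.mem_union.mpr (Or.inr (Finset.mem_image_of_mem _ hw)))]
    rw [Function.iterate_succ_apply']
  have t2 : (∑ v ∈ T, D.Dx^[v.2] (b v.1) *
        ∑ w ∈ S, D.u (w.1, w.2 + 1) * D.pd v (D.pd w f))
      = ∑ v ∈ S, D.Dx^[v.2] (b v.1) *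
        ∑ w ∈ S, D.u (w.1, w.2 + 1) * D.pd w (D.pd v f) := by
    rw [← Finset.sum_subset hST (fun v _ hv => ?_)]
    · refine Finset.sum_congr rfl fun v _ => ?_
      congr 1
      exact Finset.sum_congr rfl fun w _ => by rw [D.pd_comm]
    · have hvf : v ∉ D.supp f := fun h => hv (hfS h)
      have : ∀ w ∈ S, D.u (w.1, w.2 + 1) * D.pd v (D.pd w f) = 0 := by
        intro w _
        rw [D.pd_comm, D.pd_eq_zero f v hvf, D.pd_zero', mul_zero]
      rw [Finset.sum_congr rfl this, Finset.sum_const_zero, mul_zero]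
  have hDxpd : ∀ v ∈ S, D.Dx (D.pd v f)
      = ∑ w ∈ S, D.u (w.1, w.2 + 1) * D.pd w (D.pd v f) := by
    intro v _
    by_cases hvf : v ∈ D.supp f
    · exact D.Dx_spec (D.pd v f) S (hpdS v hvf)
    · rw [D.pd_eq_zero f v hvf, D.Dx_zero']
      exact (Finset.sum_eq_zero fun w _ => by rw [D.pd_zero', mul_zero]).symm
  rw [D.Vf_spec b (D.Dx f) hDxT, D.Dx_spec f S hfS]
  simp only [expand, mul_add, Finset.sum_add_distrib]
  rw [t1, t2, D.Vf_spec b f hfS, D.Dx_sum']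
  simp only [D.Dx_mul]
  rw [Finset.sum_add_distrib]
  congr 1
  exact Finset.sum_congr rfl fun v hv => by rw [hDxpd v hv]

theorem Vf_DxI (b : Fin n → A) (m : ℕ) (f : A) :
    D.Vf b (D.Dx^[m] f) = D.Dx^[m] (D.Vf b f) := by
  induction m with
  | zero => rfl
  | succ m ih =>
      rw [Function.iterate_succ_apply', Function.iterate_succ_apply', D.Vf_Dx, ih]

/-- The characteristic `(Bχ)^k = Σ_l η^{kl} ∂_x χ_l` of the Hamiltonian flow
associated with a 1-form `χ`. -/
def Bc (η : Fin n → Fin n → ℝ) (χ : Fin n → A) : Fin n → A :=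
  fun k => ∑ l, η k l • D.Dx (χ l)

theorem pbr_eq (η : Fin n → Fin n → ℝ) (α β : Fin n → A) (i : Fin n) :
    D.pbracket η α β i = D.Vf (D.Bc η β) (α i) - D.Vf (D.Bc η α) (β i) := by
  have h : ∀ (χ ψ : Fin n → A) (j : Fin n),
      D.Vf (D.Bc η ψ) (χ j)
        = ∑ v ∈ D.supp (χ j), ∑ l, η v.1 l • (D.Dx^[v.2 + 1] (ψ l) * D.pd v (χ j)) := by
    intro χ ψ j
    rw [D.Vf_spec (D.Bc η ψ) (χ j) (Finset.Subset.refl _)]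
    refine Finset.sum_congr rfl fun v _ => ?_
    rw [show D.Bc η ψ v.1 = ∑ l, η v.1 l • D.Dx (ψ l) from rfl,
      D.DxI_sum, Finset.sum_mul]
    refine Finset.sum_congr rfl fun l _ => ?_
    rw [D.DxI_smul, smul_mul_assoc, ← Function.iterate_succ_apply]
  simp only [pbracket]
  rw [h α β i, h β α i]

theorem Vmix (η : Fin n → Fin n → ℝ) (x y : Fin n → A) (f : A) :
    D.Vf (D.Bc η x) (D.Vf (D.Bc η y) f) - D.Vf (D.Bc η y) (D.Vf (D.Bc η x) f)
      = D.Vf (D.Bc η (D.pbracket η y x)) f := by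
  classical
  set W : Finset (Fin n × ℕ) :=
    D.supp f ∪ (D.supp f).biUnion (fun v => D.supp (D.pd v f)) with hW
  have hPW : D.supp f ⊆ W := Finset.subset_union_left
  have hpdW : ∀ v ∈ D.supp f, D.supp (D.pd v f) ⊆ W := fun v hv => by
    rw [hW]
    exact (Finset.subset_biUnion_of_mem (fun v => D.supp (D.pd v f)) hv).trans Finset.subset_union_right
  have hexp : ∀ a b : Fin n → A,
      D.Vf a (D.Vf b f)
        = (∑ v ∈ D.supp f, D.Vf a (D.Dx^[v.2] (b v.1)) * D.pd v f)
          + ∑ v ∈ D.supp f, ∑ w ∈ W,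
              D.Dx^[v.2] (b v.1) * (D.Dx^[w.2] (a w.1) * D.pd w (D.pd v f)) := by
    intro a b
    conv_lhs => rw [D.Vf_spec b f (Finset.Subset.refl _)]
    rw [D.Vf_sum, ← Finset.sum_add_distrib]
    refine Finset.sum_congr rfl fun v hv => ?_
    rw [D.Vf_mul, D.Vf_spec a (D.pd v f) (hpdW v hv), Finset.mul_sum]
  have hdoub : (∑ v ∈ D.supp f, ∑ w ∈ W,
        D.Dx^[v.2] (D.Bc η y v.1) * (D.Dx^[w.2] (D.Bc η x w.1) * D.pd w (D.pd v f)))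
      = ∑ v ∈ D.supp f, ∑ w ∈ W,
        D.Dx^[v.2] (D.Bc η x v.1) * (D.Dx^[w.2] (D.Bc η y w.1) * D.pd w (D.pd v f)) := by
    have ext : ∀ c d : Fin n → A,
        (∑ v ∈ D.supp f, ∑ w ∈ W,
            D.Dx^[v.2] (c v.1) * (D.Dx^[w.2] (d w.1) * D.pd w (D.pd v f)))
        = ∑ v ∈ W, ∑ w ∈ W,
            D.Dx^[v.2] (c v.1) * (D.Dx^[w.2] (d w.1) * D.pd w (D.pd v f)) := by
      intro c d
      refine Finset.sum_subset hPW fun v _ hv => ?_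
      refine Finset.sum_eq_zero fun w _ => ?_
      rw [D.pd_eq_zero f v hv, D.pd_zero', mul_zero, mul_zero]
    rw [ext, ext, Finset.sum_comm]
    refine Finset.sum_congr rfl fun v _ => Finset.sum_congr rfl fun w _ => ?_
    rw [D.pd_comm]
    ring
  have hkey : ∀ v : Fin n × ℕ,
      D.Vf (D.Bc η x) (D.Dx^[v.2] (D.Bc η y v.1))
        - D.Vf (D.Bc η y) (D.Dx^[v.2] (D.Bc η x v.1))
      = D.Dx^[v.2] (D.Bc η (D.pbracket η y x) v.1) := by
    intro v
    rw [D.Vf_DxI, D.Vf_DxI, ← D.DxI_sub]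
    congr 1
    show D.Vf (D.Bc η x) (∑ l, η v.1 l • D.Dx (y l))
        - D.Vf (D.Bc η y) (∑ l, η v.1 l • D.Dx (x l))
        = ∑ l, η v.1 l • D.Dx (D.pbracket η y x l)
    rw [D.Vf_sum, D.Vf_sum, ← Finset.sum_sub_distrib]
    refine Finset.sum_congr rfl fun l _ => ?_
    rw [D.Vf_smul, D.Vf_smul, D.Vf_Dx, D.Vf_Dx, ← smul_sub, ← D.Dx_sub', ← D.pbr_eq]
  rw [hexp (D.Bc η x) (D.Bc η y), hexp (D.Bc η y) (D.Bc η x), hdoub,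
    add_sub_add_right_eq_sub, D.Vf_spec (D.Bc η (D.pbracket η y x)) f (Finset.Subset.refl _),
    ← Finset.sum_sub_distrib]
  refine Finset.sum_congr rfl fun v _ => ?_
  rw [← sub_mul, hkey v]

end DiffPolyAlg

/-- The Poisson bracket on 1-forms satisfies the Jacobi
identity: for all `α, β, γ ∈ 𝒜ⁿ` and every `i ∈ {1,…,n}`,
`{α, {β, γ}}_i + {β, {γ, α}}_i + {γ, {α, β}}_i = 0` in `𝒜`. -/
theorem pbracket_jacobi {n : ℕ} (hn : 1 ≤ n) {A : Type*} [CommRing A]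
    [Algebra ℝ A] (D : DiffPolyAlg n A)
    (η : Fin n → Fin n → ℝ) (hη_symm : ∀ k l, η k l = η l k)
    (η' : Fin n → Fin n → ℝ)
    (hη_nondeg : ∀ i j, ∑ k, η i k * η' k j = if i = j then (1 : ℝ) else 0)
    (α β γ : Fin n → A) (i : Fin n) :
    D.pbracket η α (D.pbracket η β γ) i
      + D.pbracket η β (D.pbracket η γ α) i
      + D.pbracket η γ (D.pbracket η α β) i = 0 := by
  rw [D.pbr_eq η α (D.pbracket η β γ) i, D.pbr_eq η β (D.pbracket η γ α) i,
    D.pbr_eq η γ (D.pbracket η α β) i,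
    ← D.Vmix η γ β (α i), ← D.Vmix η α γ (β i), ← D.Vmix η β α (γ i),
    D.pbr_eq η β γ i, D.pbr_eq η γ α i, D.pbr_eq η α β i,
    D.Vf_sub, D.Vf_sub, D.Vf_sub]
  ring
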